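/- Let Q ∈ ℝ^{s×s} be symmetric, let y, v ∈ ℝ^s and κ ∈ ℝ, and set Q' := Q + κ (Qv)(Qv)ᵀ. Assume 1ᵀ Q 1 ≠ 0 and 1ᵀ Q' 1 ≠ 0, where 1 is the all-ones vector in ℝ^s. Define μ_y(Q) := (1ᵀ Q y)/(1ᵀ Q 1) and y^c := y − μ_y(Q)·1. Then μ_y(Q') − μ_y(Q) = κ · (1ᵀ Q v) · (vᵀ Q y^c) / (1ᵀ Q' 1). -/

import Mathlib

open Matrix

/-- The intercept-type ratio `μ_y(Q) = (1ᵀ Q y)/(1ᵀ Q 1)`. -/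
noncomputable def muRatio {s : ℕ} (Q : Matrix (Fin s) (Fin s) ℝ) (y : Fin s → ℝ) : ℝ :=
  ((fun _ => (1 : ℝ)) ⬝ᵥ Q.mulVec y) / ((fun _ => (1 : ℝ)) ⬝ᵥ Q.mulVec fun _ => (1 : ℝ))

lemma vecMulVec_mulVec' {s : ℕ} (w u x : Fin s → ℝ) :
    (vecMulVec w u).mulVec x = (u ⬝ᵥ x) • w := by
  ext i
  simp only [mulVec, vecMulVec_apply, dotProduct, Pi.smul_apply, smul_eq_mul,
    Finset.sum_mul]
  exact Finset.sum_congr rfl fun j _ => by ring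

/-- rank-one ratio update: for symmetric `Q` and
`Q' = Q + κ (Qv)(Qv)ᵀ` with `1ᵀQ1 ≠ 0` and `1ᵀQ'1 ≠ 0`,
`μ_y(Q') − μ_y(Q) = κ (1ᵀQv)(vᵀQ y^c)/(1ᵀQ'1)` where `y^c = y − μ_y(Q)·1`. -/
theorem stmt11 {s : ℕ} (Q : Matrix (Fin s) (Fin s) ℝ) (hQ : Qᵀ = Q)
    (y v : Fin s → ℝ) (κ : ℝ) (Q' : Matrix (Fin s) (Fin s) ℝ)
    (hQ' : Q' = Q + κ • vecMulVec (Q.mulVec v) (Q.mulVec v))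
    (h1 : (fun _ => (1 : ℝ)) ⬝ᵥ (Q.mulVec fun _ => (1 : ℝ)) ≠ 0)
    (h2 : (fun _ => (1 : ℝ)) ⬝ᵥ (Q'.mulVec fun _ => (1 : ℝ)) ≠ 0) :
    muRatio Q' y - muRatio Q y =
      κ * ((fun _ => (1 : ℝ)) ⬝ᵥ Q.mulVec v) *
          (v ⬝ᵥ Q.mulVec (y - muRatio Q y • fun _ => (1 : ℝ))) /
        ((fun _ => (1 : ℝ)) ⬝ᵥ Q'.mulVec fun _ => (1 : ℝ)) := by
  set one : Fin s → ℝ := fun _ => (1 : ℝ) with hone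
  set a : ℝ := one ⬝ᵥ Q.mulVec one with ha
  set b : ℝ := one ⬝ᵥ Q.mulVec y with hb
  set c : ℝ := one ⬝ᵥ Q.mulVec v with hc
  set d : ℝ := v ⬝ᵥ Q.mulVec y with hd
  -- symmetry facts
  have key : ∀ x z : Fin s → ℝ, Q.mulVec x ⬝ᵥ z = x ⬝ᵥ Q.mulVec z := fun x z => by
    rw [dotProduct_comm, dotProduct_mulVec, ← mulVec_transpose, hQ, dotProduct_comm]
  have hw1 : Q.mulVec v ⬝ᵥ one = c := by
    rw [dotProduct_comm]
  have hwy : Q.mulVec v ⬝ᵥ y = d := by rw [key]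
  have hvQ1 : v ⬝ᵥ Q.mulVec one = c := by rw [← key, dotProduct_comm]
  -- expand Q'
  have hden : one ⬝ᵥ Q'.mulVec one = a + κ * c * c := by
    rw [hQ', add_mulVec, dotProduct_add, smul_mulVec, vecMulVec_mulVec',
      dotProduct_smul, dotProduct_smul, hw1, smul_eq_mul, smul_eq_mul]
    ring
  have hnum : one ⬝ᵥ Q'.mulVec y = b + κ * c * d := by
    rw [hQ', add_mulVec, dotProduct_add, smul_mulVec, vecMulVec_mulVec',
      dotProduct_smul, dotProduct_smul, hwy, smul_eq_mul, smul_eq_mul]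
    ring
  have hyc : v ⬝ᵥ Q.mulVec (y - muRatio Q y • one) = d - (b / a) * c := by
    rw [mulVec_sub, dotProduct_sub, mulVec_smul, dotProduct_smul, hvQ1,
      smul_eq_mul]
    simp [muRatio, muRatio, ← ha, ← hb, hd]
    exact Or.inl rfl
  rw [hyc]
  have hmu : muRatio Q y = b / a := rfl
  have hmu' : muRatio Q' y = (b + κ * c * d) / (a + κ * c * c) := by
    exact congrArg₂ (· / ·) hnum hden
  rw [hmu, hmu', hden]
  rw [hden] at h2
  rw [div_sub_div _ _ h2 h1, div_eq_div_iff (mul_ne_zero h2 h1) h2,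
    div_mul_eq_mul_div, sub_div' h1]
  field_simp
  ring
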